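/- Let a < b be integers and let x, x' : ℤ → ℝ satisfy |x(i) - x'(i)| ≤ 1 for all i ∈ [a, b]. Define the linear interpolant ξ(t) = (t - a)·(x(b) - x(a))/(b - a) + x(a), and similarly ξ' using x'. Define L₁ = Σ_{i=a}^{b} |ξ(i) - x(i)| and L₁' = Σ_{i=a}^{b} |ξ'(i) - x'(i)|. Then |L₁' - L₁| ≤ 2(b - a). -/

import Mathlib

theorem l1_score_sensitivity (a b : ℤ) (hab : a < b) (x x' : ℤ → ℝ)
    (hx : ∀ i ∈ Finset.Icc a b, |x i - x' i| ≤ 1)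
    (ξ ξ' : ℤ → ℝ)
    (hξ : ∀ t, ξ t = (t - a) * (x b - x a) / (b - a) + x a)
    (hξ' : ∀ t, ξ' t = (t - a) * (x' b - x' a) / (b - a) + x' a) :
    |(∑ i ∈ Finset.Icc a b, |ξ' i - x' i|) - (∑ i ∈ Finset.Icc a b, |ξ i - x i|)| ≤
      2 * (b - a) := by
  have habR : (a : ℝ) < b := by exact_mod_cast hab
  have hba : (0:ℝ) < (b:ℝ) - a := by linarith
  have hba' : ((b:ℝ) - a) ≠ 0 := ne_of_gt hba
  have hξa : ξ a = x a := by rw [hξ]; simp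
  have hξb : ξ b = x b := by rw [hξ]; field_simp; ring
  have hξ'a : ξ' a = x' a := by rw [hξ']; simp
  have hξ'b : ξ' b = x' b := by rw [hξ']; field_simp; ring
  have hsub : Finset.Ioo a b ⊆ Finset.Icc a b := Finset.Ioo_subset_Icc_self
  have h1 : ∑ i ∈ Finset.Icc a b, |ξ i - x i| = ∑ i ∈ Finset.Ioo a b, |ξ i - x i| := by
    refine (Finset.sum_subset hsub ?_).symm
    intro i hi hni
    simp only [Finset.mem_Icc] at hi
    simp only [Finset.mem_Ioo, not_and_or, not_lt] at hni
    rcases hni with h | h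
    · have : i = a := le_antisymm h hi.1
      subst this; rw [hξa]; simp
    · have : i = b := le_antisymm hi.2 h
      subst this; rw [hξb]; simp
  have h2 : ∑ i ∈ Finset.Icc a b, |ξ' i - x' i| = ∑ i ∈ Finset.Ioo a b, |ξ' i - x' i| := by
    refine (Finset.sum_subset hsub ?_).symm
    intro i hi hni
    simp only [Finset.mem_Icc] at hi
    simp only [Finset.mem_Ioo, not_and_or, not_lt] at hni
    rcases hni with h | h
    · have : i = a := le_antisymm h hi.1
      subst this; rw [hξ'a]; simp
    · have : i = b := le_antisymm hi.2 h
      subst this; rw [hξ'b]; simp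
  rw [h1, h2, ← Finset.sum_sub_distrib]
  have ha1 : |x' a - x a| ≤ 1 := by
    rw [abs_sub_comm]; exact hx a (by simp [Finset.mem_Icc, le_of_lt hab])
  have hb1 : |x' b - x b| ≤ 1 := by
    rw [abs_sub_comm]; exact hx b (by simp [Finset.mem_Icc, le_of_lt hab])
  calc |∑ i ∈ Finset.Ioo a b, (|ξ' i - x' i| - |ξ i - x i|)|
      ≤ ∑ i ∈ Finset.Ioo a b, |(|ξ' i - x' i| - |ξ i - x i|)| :=
        Finset.abs_sum_le_sum_abs _ _
    _ ≤ ∑ _i ∈ Finset.Ioo a b, (2:ℝ) := by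
        apply Finset.sum_le_sum
        intro i hi
        simp only [Finset.mem_Ioo] at hi
        have hi1 : |x' i - x i| ≤ 1 := by
          rw [abs_sub_comm]
          exact hx i (by simp [Finset.mem_Icc, le_of_lt hi.1, le_of_lt hi.2])
        set l : ℝ := ((i:ℝ) - a)/((b:ℝ) - a) with hl
        have hiaR : (a:ℝ) ≤ i := by exact_mod_cast le_of_lt hi.1
        have hibR : (i:ℝ) ≤ b := by exact_mod_cast le_of_lt hi.2
        have hl0 : 0 ≤ l := div_nonneg (by linarith) (le_of_lt hba)
        have hl1 : l ≤ 1 := by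
          rw [hl, div_le_one hba]; linarith
        have key : ξ' i - ξ i = (1 - l) * (x' a - x a) + l * (x' b - x b) := by
          rw [hξ, hξ', hl]; field_simp; ring
        have hξdiff : |ξ' i - ξ i| ≤ 1 := by
          rw [key]
          calc |(1 - l) * (x' a - x a) + l * (x' b - x b)|
              ≤ |(1 - l) * (x' a - x a)| + |l * (x' b - x b)| := abs_add_le _ _
            _ = (1 - l) * |x' a - x a| + l * |x' b - x b| := by
                rw [abs_mul, abs_mul, abs_of_nonneg (by linarith : (0:ℝ) ≤ 1 - l),
                  abs_of_nonneg hl0]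
            _ ≤ (1 - l) * 1 + l * 1 := by
                gcongr
            _ = 1 := by ring
        calc |(|ξ' i - x' i| - |ξ i - x i|)|
            ≤ |(ξ' i - x' i) - (ξ i - x i)| := abs_abs_sub_abs_le_abs_sub _ _
          _ = |(ξ' i - ξ i) - (x' i - x i)| := by ring_nf
          _ ≤ |ξ' i - ξ i| + |x' i - x i| := abs_sub _ _
          _ ≤ 1 + 1 := by linarith
          _ = 2 := by norm_num
    _ = (Finset.Ioo a b).card * 2 := by rw [Finset.sum_const, nsmul_eq_mul]
    _ ≤ 2 * ((b:ℝ) - a) := by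
        rw [Int.card_Ioo]
        have h0 : (0:ℤ) ≤ b - a - 1 := by omega
        have h0' : ((b - a - 1).toNat : ℤ) = b - a - 1 := Int.toNat_of_nonneg h0
        have : ((b - a - 1).toNat : ℝ) = (b:ℝ) - a - 1 := by exact_mod_cast h0'
        rw [this]; linarith
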